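/- Let 𝒱 = (s₁,s₂)×(t₁,t₂) ⊆ ℝ² ≅ ℂ, let g be holomorphic on 𝒱 with g'(z) ≠ 0 for all z ∈ 𝒱, and set ω = log|g'| and σ = −|g|²/2. Let 𝔮 ∈ ℝ and let v : 𝒱 → ℝ be a C² function satisfying v_xx + v_yy + 2e^{2ω} = 0 and v_zz − 2ω_z v_z = 𝔮 on 𝒱, where v_z = (v_x − iv_y)/2, v_zz = (v_xx − v_yy − 2iv_xy)/4 and ω_z = (ω_x − iω_y)/2. Fix x₀ ∈ (s₁,s₂) and suppose there exist a, b, c, d₁, d₂ ∈ ℝ with b ≠ 0 such that, setting L = d₁·Re g + d₂·Im g, for all y ∈ (t₁,t₂): v(x₀,y) = a + c·σ(x₀,y) + L(x₀,y) and v_x(x₀,y) = b·e^{ω(x₀,y)} + c·σ_x(x₀,y) + L_x(x₀,y). Then 2ω_x(x₀,y) = −(4𝔮/b)·e^{−ω(x₀,y)} − (2(1−c)/b)·e^{ω(x₀,y)} for all y ∈ (t₁,t₂). -/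

import Mathlib

open Set

/-- Proposition 2.7 (first direction): if the vertical parameter curve `x = x₀` of a
conformal eigenline parametrization is a capillary curve with capillarity constant
`b ≠ 0`, then `2ω_x = −(4𝔮/b)e^{−ω} − (2(1−c)/b)e^{ω}` along it. -/
theorem capillary_implies_omega_equation
    (s₁ s₂ t₁ t₂ : ℝ) (V : Set ℂ)
    (hV : V = {z : ℂ | z.re ∈ Ioo s₁ s₂ ∧ z.im ∈ Ioo t₁ t₂})
    (g g' : ℂ → ℂ)
    (hg : ∀ z ∈ V, HasDerivAt g (g' z) z)
    (hg'ne : ∀ z ∈ V, g' z ≠ 0)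
    (ω σ : ℂ → ℝ)
    (hωdef : ∀ z, ω z = Real.log (‖g' z‖))
    (hσdef : ∀ z, σ z = -‖g z‖^2 / 2)
    (ωx ωy : ℂ → ℝ)
    (hωx : ∀ z ∈ V, HasDerivAt (fun t : ℝ => ω (z + t)) (ωx z) 0)
    (hωy : ∀ z ∈ V, HasDerivAt (fun t : ℝ => ω (z + t * Complex.I)) (ωy z) 0)
    (v : ℂ → ℝ) (hv : ContDiffOn ℝ 2 v V)
    (vx vy vxx vyy vxy : ℂ → ℝ)
    (hvx : ∀ z ∈ V, HasDerivAt (fun t : ℝ => v (z + t)) (vx z) 0)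
    (hvy : ∀ z ∈ V, HasDerivAt (fun t : ℝ => v (z + t * Complex.I)) (vy z) 0)
    (hvxx : ∀ z ∈ V, HasDerivAt (fun t : ℝ => vx (z + t)) (vxx z) 0)
    (hvyy : ∀ z ∈ V, HasDerivAt (fun t : ℝ => vy (z + t * Complex.I)) (vyy z) 0)
    (hvxy : ∀ z ∈ V, HasDerivAt (fun t : ℝ => vx (z + t * Complex.I)) (vxy z) 0)
    (hpde : ∀ z ∈ V, vxx z + vyy z + 2 * Real.exp (2 * ω z) = 0)
    (𝔮 : ℝ)
    (hhopf : ∀ z ∈ V,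
      ((vxx z : ℂ) - (vyy z : ℂ) - 2 * Complex.I * (vxy z : ℂ)) / 4
        - 2 * (((ωx z : ℂ) - Complex.I * (ωy z : ℂ)) / 2)
            * (((vx z : ℂ) - Complex.I * (vy z : ℂ)) / 2) = (𝔮 : ℂ))
    (x₀ : ℝ) (hx₀ : x₀ ∈ Ioo s₁ s₂)
    (a b c d₁ d₂ : ℝ) (hb : b ≠ 0)
    (hcap1 : ∀ y ∈ Ioo t₁ t₂,
      v ((x₀ : ℂ) + (y : ℂ) * Complex.I)
        = a + c * σ ((x₀ : ℂ) + (y : ℂ) * Complex.I)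
          + (d₁ * (g ((x₀ : ℂ) + (y : ℂ) * Complex.I)).re
            + d₂ * (g ((x₀ : ℂ) + (y : ℂ) * Complex.I)).im))
    (hcap2 : ∀ y ∈ Ioo t₁ t₂,
      vx ((x₀ : ℂ) + (y : ℂ) * Complex.I)
        = b * Real.exp (ω ((x₀ : ℂ) + (y : ℂ) * Complex.I))
          + c * (-((starRingEnd ℂ) (g ((x₀ : ℂ) + (y : ℂ) * Complex.I))
              * g' ((x₀ : ℂ) + (y : ℂ) * Complex.I)).re)
          + (d₁ * (g' ((x₀ : ℂ) + (y : ℂ) * Complex.I)).re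
            + d₂ * (g' ((x₀ : ℂ) + (y : ℂ) * Complex.I)).im)) :
    ∀ y ∈ Ioo t₁ t₂,
      2 * ωx ((x₀ : ℂ) + (y : ℂ) * Complex.I)
        = -(4 * 𝔮 / b) * Real.exp (-(ω ((x₀ : ℂ) + (y : ℂ) * Complex.I)))
          - (2 * (1 - c) / b) * Real.exp (ω ((x₀ : ℂ) + (y : ℂ) * Complex.I)) := by
  intro y hy
  have hVopen : IsOpen V := by
    rw [hV]
    exact (isOpen_Ioo.preimage Complex.continuous_re).inter
      (isOpen_Ioo.preimage Complex.continuous_im)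
  have hmem : ∀ s ∈ Ioo t₁ t₂, ((x₀:ℂ) + (s:ℂ) * Complex.I) ∈ V := by
    intro s hs
    rw [hV]; constructor <;> simp [hx₀, hs]
  have hzV : ((x₀:ℂ) + (y:ℂ) * Complex.I) ∈ V := hmem y hy
  have hana : AnalyticOnNhd ℂ g V :=
    DifferentiableOn.analyticOnNhd
      (fun w hw => (hg w hw).differentiableAt.differentiableWithinAt) hVopen
  have hg'd : HasDerivAt g' (deriv (deriv g) ((x₀:ℂ) + (y:ℂ) * Complex.I))
      ((x₀:ℂ) + (y:ℂ) * Complex.I) := by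
    have hEq : g' =ᶠ[nhds ((x₀:ℂ) + (y:ℂ) * Complex.I)] deriv g := by
      filter_upwards [hVopen.mem_nhds hzV] with w hw
      exact ((hg w hw).deriv).symm
    exact ((hana.deriv _ hzV).differentiableAt.hasDerivAt).congr_of_eventuallyEq hEq
  -- reparametrization along the vertical line
  have key : ∀ (f : ℂ → ℝ) (d : ℝ) (s : ℝ),
      HasDerivAt (fun t : ℝ => f (((x₀:ℂ) + (s:ℂ)*Complex.I) + t*Complex.I)) d 0 →
      HasDerivAt (fun u : ℝ => f ((x₀:ℂ) + (u:ℂ)*Complex.I)) d s := by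
    intro f d s h
    have h1 : HasDerivAt (fun u : ℝ => u - s) 1 s := by
      simpa using (hasDerivAt_id s).sub_const s
    have h2 := HasDerivAt.comp s (by simpa using h) h1
    have h3 : ((fun t : ℝ => f (((x₀:ℂ) + (s:ℂ)*Complex.I) + t*Complex.I)) ∘ (fun u : ℝ => u - s))
        = fun u : ℝ => f ((x₀:ℂ) + (u:ℂ)*Complex.I) := by
      funext u
      simp only [Function.comp]
      congr 1
      push_cast
      ring
    rw [h3] at h2
    simpa using h2
  have hΓ : ∀ s : ℝ, HasDerivAt (fun u : ℝ => (x₀:ℂ) + (u:ℂ)*Complex.I) Complex.I s := by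
    intro s
    have h1 : HasDerivAt (fun u : ℝ => (u:ℂ)) 1 s := Complex.ofRealCLM.hasDerivAt
    simpa using (h1.mul_const Complex.I).const_add (x₀:ℂ)
  have hgc : ∀ s ∈ Ioo t₁ t₂, HasDerivAt (fun u : ℝ => g ((x₀:ℂ) + (u:ℂ)*Complex.I))
      (Complex.I * g' ((x₀:ℂ) + (s:ℂ)*Complex.I)) s := by
    intro s hs
    have := HasDerivAt.scomp (𝕜 := ℝ) (𝕜' := ℂ) s (hg _ (hmem s hs)) (hΓ s)
    simpa [Function.comp_def, smul_eq_mul] using this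
  have hgre : ∀ s ∈ Ioo t₁ t₂, HasDerivAt (fun u : ℝ => (g ((x₀:ℂ) + (u:ℂ)*Complex.I)).re)
      (-(g' ((x₀:ℂ) + (s:ℂ)*Complex.I)).im) s := by
    intro s hs
    have := Complex.reCLM.hasFDerivAt.comp_hasDerivAt s (hgc s hs)
    simpa [Function.comp_def, Complex.mul_re] using this
  have hgim : ∀ s ∈ Ioo t₁ t₂, HasDerivAt (fun u : ℝ => (g ((x₀:ℂ) + (u:ℂ)*Complex.I)).im)
      ((g' ((x₀:ℂ) + (s:ℂ)*Complex.I)).re) s := by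
    intro s hs
    have := Complex.imCLM.hasFDerivAt.comp_hasDerivAt s (hgc s hs)
    simpa [Function.comp_def, Complex.mul_im] using this
  -- derivative of g' along the line, at y only
  have hg'c : HasDerivAt (fun u : ℝ => g' ((x₀:ℂ) + (u:ℂ)*Complex.I))
      (Complex.I * deriv (deriv g) ((x₀:ℂ) + (y:ℂ)*Complex.I)) y := by
    have := HasDerivAt.scomp (𝕜 := ℝ) (𝕜' := ℂ) y hg'd (hΓ y)
    simpa [Function.comp_def, smul_eq_mul] using this
  have hg're : HasDerivAt (fun u : ℝ => (g' ((x₀:ℂ) + (u:ℂ)*Complex.I)).re)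
      (-(deriv (deriv g) ((x₀:ℂ) + (y:ℂ)*Complex.I)).im) y := by
    have := Complex.reCLM.hasFDerivAt.comp_hasDerivAt y hg'c
    simpa [Function.comp_def, Complex.mul_re] using this
  have hg'im : HasDerivAt (fun u : ℝ => (g' ((x₀:ℂ) + (u:ℂ)*Complex.I)).im)
      ((deriv (deriv g) ((x₀:ℂ) + (y:ℂ)*Complex.I)).re) y := by
    have := Complex.imCLM.hasFDerivAt.comp_hasDerivAt y hg'c
    simpa [Function.comp_def, Complex.mul_im] using this
  -- sigma along the line
  have hσc : ∀ s ∈ Ioo t₁ t₂, HasDerivAt (fun u : ℝ => σ ((x₀:ℂ) + (u:ℂ)*Complex.I))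
      ((g ((x₀:ℂ) + (s:ℂ)*Complex.I)).re * (g' ((x₀:ℂ) + (s:ℂ)*Complex.I)).im
        - (g ((x₀:ℂ) + (s:ℂ)*Complex.I)).im * (g' ((x₀:ℂ) + (s:ℂ)*Complex.I)).re) s := by
    intro s hs
    have hfun : (fun u : ℝ => σ ((x₀:ℂ) + (u:ℂ)*Complex.I))
        = fun u : ℝ => -(((g ((x₀:ℂ) + (u:ℂ)*Complex.I)).re * (g ((x₀:ℂ) + (u:ℂ)*Complex.I)).re
            + (g ((x₀:ℂ) + (u:ℂ)*Complex.I)).im * (g ((x₀:ℂ) + (u:ℂ)*Complex.I)).im)) / 2 := by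
      funext u
      rw [hσdef, Complex.sq_norm, Complex.normSq_apply]
    rw [hfun]
    have h := (((hgre s hs).mul (hgre s hs)).add ((hgim s hs).mul (hgim s hs))).neg.div_const 2
    exact h.congr_deriv (by ring)
  -- the key first-derivative identity:  vy = c σ_y + L_y  on the line
  have hvyId : ∀ s ∈ Ioo t₁ t₂,
      vy ((x₀:ℂ) + (s:ℂ)*Complex.I)
        = c * ((g ((x₀:ℂ) + (s:ℂ)*Complex.I)).re * (g' ((x₀:ℂ) + (s:ℂ)*Complex.I)).im
            - (g ((x₀:ℂ) + (s:ℂ)*Complex.I)).im * (g' ((x₀:ℂ) + (s:ℂ)*Complex.I)).re)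
          + (d₁ * (-(g' ((x₀:ℂ) + (s:ℂ)*Complex.I)).im)
            + d₂ * (g' ((x₀:ℂ) + (s:ℂ)*Complex.I)).re) := by
    intro s hs
    have hL : HasDerivAt (fun u : ℝ => v ((x₀:ℂ) + (u:ℂ)*Complex.I))
        (vy ((x₀:ℂ) + (s:ℂ)*Complex.I)) s := key v _ s (hvy _ (hmem s hs))
    have hR : HasDerivAt (fun u : ℝ => a + c * σ ((x₀:ℂ) + (u:ℂ)*Complex.I)
        + (d₁ * (g ((x₀:ℂ) + (u:ℂ)*Complex.I)).re + d₂ * (g ((x₀:ℂ) + (u:ℂ)*Complex.I)).im))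
        (c * ((g ((x₀:ℂ) + (s:ℂ)*Complex.I)).re * (g' ((x₀:ℂ) + (s:ℂ)*Complex.I)).im
            - (g ((x₀:ℂ) + (s:ℂ)*Complex.I)).im * (g' ((x₀:ℂ) + (s:ℂ)*Complex.I)).re)
          + (d₁ * (-(g' ((x₀:ℂ) + (s:ℂ)*Complex.I)).im)
            + d₂ * (g' ((x₀:ℂ) + (s:ℂ)*Complex.I)).re)) s := by
      have h := (((hσc s hs).const_mul c).const_add a).add
        (((hgre s hs).const_mul d₁).add ((hgim s hs).const_mul d₂))
      exact h
    have hev : (fun u : ℝ => v ((x₀:ℂ) + (u:ℂ)*Complex.I))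
        =ᶠ[nhds s] (fun u : ℝ => a + c * σ ((x₀:ℂ) + (u:ℂ)*Complex.I)
        + (d₁ * (g ((x₀:ℂ) + (u:ℂ)*Complex.I)).re + d₂ * (g ((x₀:ℂ) + (u:ℂ)*Complex.I)).im)) := by
      filter_upwards [isOpen_Ioo.mem_nhds hs] with u hu
      exact hcap1 u hu
    exact (hL.unique (hR.congr_of_eventuallyEq hev))
  -- second derivative identity: vyy on the line
  have hvyy_eq : vyy ((x₀:ℂ) + (y:ℂ)*Complex.I)
      = c * (-((g' ((x₀:ℂ) + (y:ℂ)*Complex.I)).im * (g' ((x₀:ℂ) + (y:ℂ)*Complex.I)).im)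
          + (g ((x₀:ℂ) + (y:ℂ)*Complex.I)).re * (deriv (deriv g) ((x₀:ℂ) + (y:ℂ)*Complex.I)).re
          - (g' ((x₀:ℂ) + (y:ℂ)*Complex.I)).re * (g' ((x₀:ℂ) + (y:ℂ)*Complex.I)).re
          + (g ((x₀:ℂ) + (y:ℂ)*Complex.I)).im * (deriv (deriv g) ((x₀:ℂ) + (y:ℂ)*Complex.I)).im)
        + (-(d₁ * (deriv (deriv g) ((x₀:ℂ) + (y:ℂ)*Complex.I)).re)
          - d₂ * (deriv (deriv g) ((x₀:ℂ) + (y:ℂ)*Complex.I)).im) := by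
    have hL : HasDerivAt (fun u : ℝ => vy ((x₀:ℂ) + (u:ℂ)*Complex.I))
        (vyy ((x₀:ℂ) + (y:ℂ)*Complex.I)) y := key vy _ y (hvyy _ hzV)
    have hR := ((((hgre y hy).mul hg'im).sub ((hgim y hy).mul hg're)).const_mul c).add
      ((hg'im.neg.const_mul d₁).add (hg're.const_mul d₂))
    have hev : (fun u : ℝ => vy ((x₀:ℂ) + (u:ℂ)*Complex.I))
        =ᶠ[nhds y] (fun u : ℝ =>
          c * ((g ((x₀:ℂ) + (u:ℂ)*Complex.I)).re * (g' ((x₀:ℂ) + (u:ℂ)*Complex.I)).im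
            - (g ((x₀:ℂ) + (u:ℂ)*Complex.I)).im * (g' ((x₀:ℂ) + (u:ℂ)*Complex.I)).re)
          + (d₁ * (-(g' ((x₀:ℂ) + (u:ℂ)*Complex.I)).im)
            + d₂ * (g' ((x₀:ℂ) + (u:ℂ)*Complex.I)).re)) := by
      filter_upwards [isOpen_Ioo.mem_nhds hy] with u hu
      exact hvyId u hu
    have := hL.unique (HasDerivAt.congr_of_eventuallyEq (by convert hR using 1; rfl) hev)
    rw [this]
    ring
  -- derivative of log |w| helper
  have logder : ∀ (w : ℝ → ℂ) (w' : ℂ) (s : ℝ), HasDerivAt w w' s → w s ≠ 0 →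
      HasDerivAt (fun u => Real.log (‖w u‖))
        (((w s).re * w'.re + (w s).im * w'.im)
          / ((w s).re * (w s).re + (w s).im * (w s).im)) s := by
    intro w w' s hw hne
    have hre : HasDerivAt (fun u => (w u).re) w'.re s :=
      Complex.reCLM.hasFDerivAt.comp_hasDerivAt s hw
    have him : HasDerivAt (fun u => (w u).im) w'.im s :=
      Complex.imCLM.hasFDerivAt.comp_hasDerivAt s hw
    have hfun : (fun u => Real.log (‖w u‖))
        = fun u => Real.log ((w u).re * (w u).re + (w u).im * (w u).im) / 2 := by
      funext u
      rw [Complex.norm_def, Real.log_sqrt (Complex.normSq_nonneg _), Complex.normSq_apply]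
    rw [hfun]
    have hn0 : ((w s).re * (w s).re + (w s).im * (w s).im) ≠ 0 := by
      simpa [Complex.normSq_apply] using (Complex.normSq_pos.mpr hne).ne'
    have h := (((hre.mul hre).add (him.mul him)).log hn0).div_const 2
    exact h.congr_deriv (by simp only [Pi.add_apply, Pi.mul_apply]; ring)
  -- ωx at the point
  have hg'x : HasDerivAt (fun t : ℝ => g' (((x₀:ℂ) + (y:ℂ)*Complex.I) + (t:ℂ)))
      (deriv (deriv g) ((x₀:ℂ) + (y:ℂ)*Complex.I)) 0 := by
    have hinner : HasDerivAt (fun t : ℝ => ((x₀:ℂ) + (y:ℂ)*Complex.I) + (t:ℂ)) 1 0 := by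
      simpa using (Complex.ofRealCLM.hasDerivAt (x := (0:ℝ))).const_add ((x₀:ℂ) + (y:ℂ)*Complex.I)
    have := HasDerivAt.scomp (𝕜 := ℝ) (𝕜' := ℂ) 0 (by simpa using hg'd) hinner
    simpa [Function.comp_def, smul_eq_mul] using this
  have hωx_eq : ωx ((x₀:ℂ) + (y:ℂ)*Complex.I)
      = ((g' ((x₀:ℂ) + (y:ℂ)*Complex.I)).re * (deriv (deriv g) ((x₀:ℂ) + (y:ℂ)*Complex.I)).re
          + (g' ((x₀:ℂ) + (y:ℂ)*Complex.I)).im * (deriv (deriv g) ((x₀:ℂ) + (y:ℂ)*Complex.I)).im)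
        / ((g' ((x₀:ℂ) + (y:ℂ)*Complex.I)).re * (g' ((x₀:ℂ) + (y:ℂ)*Complex.I)).re
          + (g' ((x₀:ℂ) + (y:ℂ)*Complex.I)).im * (g' ((x₀:ℂ) + (y:ℂ)*Complex.I)).im) := by
    have hne0 : g' (((x₀:ℂ) + (y:ℂ)*Complex.I) + ((0:ℝ):ℂ)) ≠ 0 := by
      simpa using hg'ne _ hzV
    have hD := logder (fun t : ℝ => g' (((x₀:ℂ) + (y:ℂ)*Complex.I) + (t:ℂ))) _ 0 hg'x hne0
    have heq : (fun t : ℝ => ω (((x₀:ℂ) + (y:ℂ)*Complex.I) + (t:ℂ)))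
        = fun t : ℝ => Real.log (‖g' (((x₀:ℂ) + (y:ℂ)*Complex.I) + (t:ℂ))‖) :=
      funext fun t => hωdef _
    rw [← heq] at hD
    have := (hωx _ hzV).unique hD
    simpa using this
  -- ωy at the point
  have hg'y : HasDerivAt (fun t : ℝ => g' (((x₀:ℂ) + (y:ℂ)*Complex.I) + (t:ℂ)*Complex.I))
      (Complex.I * deriv (deriv g) ((x₀:ℂ) + (y:ℂ)*Complex.I)) 0 := by
    have hinner : HasDerivAt (fun t : ℝ => ((x₀:ℂ) + (y:ℂ)*Complex.I) + (t:ℂ)*Complex.I)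
        Complex.I 0 := by
      simpa using ((Complex.ofRealCLM.hasDerivAt (x := (0:ℝ))).mul_const
        Complex.I).const_add ((x₀:ℂ) + (y:ℂ)*Complex.I)
    have := HasDerivAt.scomp (𝕜 := ℝ) (𝕜' := ℂ) 0 (by simpa using hg'd) hinner
    simpa [Function.comp_def, smul_eq_mul] using this
  have hωy_eq : ωy ((x₀:ℂ) + (y:ℂ)*Complex.I)
      = ((g' ((x₀:ℂ) + (y:ℂ)*Complex.I)).im * (deriv (deriv g) ((x₀:ℂ) + (y:ℂ)*Complex.I)).re
          - (g' ((x₀:ℂ) + (y:ℂ)*Complex.I)).re * (deriv (deriv g) ((x₀:ℂ) + (y:ℂ)*Complex.I)).im)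
        / ((g' ((x₀:ℂ) + (y:ℂ)*Complex.I)).re * (g' ((x₀:ℂ) + (y:ℂ)*Complex.I)).re
          + (g' ((x₀:ℂ) + (y:ℂ)*Complex.I)).im * (g' ((x₀:ℂ) + (y:ℂ)*Complex.I)).im) := by
    have hne0 : g' (((x₀:ℂ) + (y:ℂ)*Complex.I) + ((0:ℝ):ℂ)*Complex.I) ≠ 0 := by
      simpa using hg'ne _ hzV
    have hD := logder (fun t : ℝ => g' (((x₀:ℂ) + (y:ℂ)*Complex.I) + (t:ℂ)*Complex.I)) _ 0 hg'y hne0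
    have heq : (fun t : ℝ => ω (((x₀:ℂ) + (y:ℂ)*Complex.I) + (t:ℂ)*Complex.I))
        = fun t : ℝ => Real.log (‖g' (((x₀:ℂ) + (y:ℂ)*Complex.I) + (t:ℂ)*Complex.I)‖) :=
      funext fun t => hωdef _
    rw [← heq] at hD
    have := (hωy _ hzV).unique hD
    simp only [Complex.ofReal_zero, zero_mul, add_zero, Complex.mul_re, Complex.mul_im,
      Complex.I_re, Complex.I_im] at this
    rw [this]
    ring_nf
  -- value facts at the point
  have hvy_eq := hvyId y hy
  have hvx_eq : vx ((x₀:ℂ) + (y:ℂ)*Complex.I)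
      = b * Real.exp (ω ((x₀:ℂ) + (y:ℂ)*Complex.I))
        + c * (-((g ((x₀:ℂ) + (y:ℂ)*Complex.I)).re * (g' ((x₀:ℂ) + (y:ℂ)*Complex.I)).re
            + (g ((x₀:ℂ) + (y:ℂ)*Complex.I)).im * (g' ((x₀:ℂ) + (y:ℂ)*Complex.I)).im))
        + (d₁ * (g' ((x₀:ℂ) + (y:ℂ)*Complex.I)).re + d₂ * (g' ((x₀:ℂ) + (y:ℂ)*Complex.I)).im) := by
    rw [hcap2 y hy]
    simp [Complex.mul_re]
  have hDpos : (0:ℝ) < (g' ((x₀:ℂ) + (y:ℂ)*Complex.I)).re * (g' ((x₀:ℂ) + (y:ℂ)*Complex.I)).re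
      + (g' ((x₀:ℂ) + (y:ℂ)*Complex.I)).im * (g' ((x₀:ℂ) + (y:ℂ)*Complex.I)).im := by
    have := Complex.normSq_pos.mpr (hg'ne _ hzV)
    simpa [Complex.normSq_apply] using this
  have hE2 : Real.exp (ω ((x₀:ℂ) + (y:ℂ)*Complex.I)) * Real.exp (ω ((x₀:ℂ) + (y:ℂ)*Complex.I))
      = (g' ((x₀:ℂ) + (y:ℂ)*Complex.I)).re * (g' ((x₀:ℂ) + (y:ℂ)*Complex.I)).re
        + (g' ((x₀:ℂ) + (y:ℂ)*Complex.I)).im * (g' ((x₀:ℂ) + (y:ℂ)*Complex.I)).im := by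
    rw [hωdef, Real.exp_log (norm_pos_iff.mpr (hg'ne _ hzV)),
      Complex.norm_def, Real.mul_self_sqrt (Complex.normSq_nonneg _), Complex.normSq_apply]
  have hvxx_eq : vxx ((x₀:ℂ) + (y:ℂ)*Complex.I)
      = -vyy ((x₀:ℂ) + (y:ℂ)*Complex.I)
        - 2 * ((g' ((x₀:ℂ) + (y:ℂ)*Complex.I)).re * (g' ((x₀:ℂ) + (y:ℂ)*Complex.I)).re
          + (g' ((x₀:ℂ) + (y:ℂ)*Complex.I)).im * (g' ((x₀:ℂ) + (y:ℂ)*Complex.I)).im) := by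
    have h := hpde _ hzV
    have h' : Real.exp (2 * ω ((x₀:ℂ) + (y:ℂ)*Complex.I))
        = (g' ((x₀:ℂ) + (y:ℂ)*Complex.I)).re * (g' ((x₀:ℂ) + (y:ℂ)*Complex.I)).re
          + (g' ((x₀:ℂ) + (y:ℂ)*Complex.I)).im * (g' ((x₀:ℂ) + (y:ℂ)*Complex.I)).im := by
      rw [two_mul, Real.exp_add, hE2]
    rw [h'] at h
    linarith
  -- real part of the Hopf identity
  have hreal : (vxx ((x₀:ℂ) + (y:ℂ)*Complex.I) - vyy ((x₀:ℂ) + (y:ℂ)*Complex.I)) / 4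
      - (ωx ((x₀:ℂ) + (y:ℂ)*Complex.I) * vx ((x₀:ℂ) + (y:ℂ)*Complex.I)
        - ωy ((x₀:ℂ) + (y:ℂ)*Complex.I) * vy ((x₀:ℂ) + (y:ℂ)*Complex.I)) / 2 = 𝔮 := by
    have h2 := congrArg Complex.re (hhopf _ hzV)
    simp only [Complex.ofReal_re] at h2
    rw [← h2]
    simp [Complex.div_re, Complex.sub_re, Complex.sub_im, Complex.mul_re, Complex.mul_im,
      Complex.I_re, Complex.I_im, Complex.ofReal_re, Complex.ofReal_im, Complex.normSq_apply]
    ring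
  -- the main algebraic identity
  have main : b * Real.exp (ω ((x₀:ℂ) + (y:ℂ)*Complex.I)) * ωx ((x₀:ℂ) + (y:ℂ)*Complex.I)
      = -(2*𝔮) - (1-c) * ((g' ((x₀:ℂ) + (y:ℂ)*Complex.I)).re * (g' ((x₀:ℂ) + (y:ℂ)*Complex.I)).re
          + (g' ((x₀:ℂ) + (y:ℂ)*Complex.I)).im * (g' ((x₀:ℂ) + (y:ℂ)*Complex.I)).im) := by
    rw [← hreal, hvxx_eq, hvyy_eq, hvx_eq, hvy_eq, hωx_eq, hωy_eq]
    have hD2 : (g' ((x₀:ℂ) + (y:ℂ)*Complex.I)).re ^ 2 + (g' ((x₀:ℂ) + (y:ℂ)*Complex.I)).im ^ 2 ≠ 0 := by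
      rw [sq, sq]; exact hDpos.ne'
    field_simp
    ring
  -- conclude
  have hEne : Real.exp (ω ((x₀:ℂ) + (y:ℂ)*Complex.I)) ≠ 0 := (Real.exp_pos _).ne'
  have hωxval : ωx ((x₀:ℂ) + (y:ℂ)*Complex.I)
      = (-(2*𝔮) - (1-c) * ((g' ((x₀:ℂ) + (y:ℂ)*Complex.I)).re * (g' ((x₀:ℂ) + (y:ℂ)*Complex.I)).re
          + (g' ((x₀:ℂ) + (y:ℂ)*Complex.I)).im * (g' ((x₀:ℂ) + (y:ℂ)*Complex.I)).im))
        / (b * Real.exp (ω ((x₀:ℂ) + (y:ℂ)*Complex.I))) := by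
    rw [← main]
    field_simp
  rw [Real.exp_neg, hωxval, ← hE2]
  field_simp
  ring
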